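/- Let X ∈ ℝ^{n×p} satisfy XᵀX = I_p, let η ∈ ℝ^{n×p} satisfy Xᵀη + ηᵀX = 0, let S ∈ ℝ^{p×p} be symmetric positive definite with S·S = I_p + ηᵀη, and set Y := (X + η)·S⁻¹. Then S satisfies the Lyapunov equation (XᵀY)·S + S·(YᵀX) = 2·I_p. -/
import Mathlib


open Matrix

/-- eq. (lyap) of the paper.
If `XᵀX = I_p`, `η` is tangent (`Xᵀη + ηᵀX = 0`), `S` is symmetric positive
definite with `S·S = I_p + ηᵀη`, and `Y = (X+η)S⁻¹`, then `S` solves the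
Lyapunov equation `(XᵀY)S + S(YᵀX) = 2 I_p`. -/
theorem polar_retraction_lyapunov
    {n p : ℕ} (X η : Matrix (Fin n) (Fin p) ℝ) (S : Matrix (Fin p) (Fin p) ℝ)
    (hX : Xᵀ * X = 1) (hη : Xᵀ * η + ηᵀ * X = 0)
    (hS : S.PosDef) (hSS : S * S = 1 + ηᵀ * η) :
    (Xᵀ * ((X + η) * S⁻¹)) * S + S * (((X + η) * S⁻¹)ᵀ * X) =
      (2 : ℝ) • (1 : Matrix (Fin p) (Fin p) ℝ) := by
  have hSinv : IsUnit S.det := (ne_of_gt hS.det_pos).isUnit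
  have h1 : S⁻¹ * S = 1 := Matrix.nonsing_inv_mul S hSinv
  have h2 : S * S⁻¹ = 1 := Matrix.mul_nonsing_inv S hSinv
  have hsymm : Sᵀ = S := hS.isHermitian.eq
  calc (Xᵀ * ((X + η) * S⁻¹)) * S + S * (((X + η) * S⁻¹)ᵀ * X)
      = Xᵀ * (X + η) * (S⁻¹ * S) + (S * (S⁻¹)ᵀ) * ((X + η)ᵀ * X) := by
        simp only [Matrix.transpose_mul, Matrix.mul_assoc]
    _ = Xᵀ * (X + η) + (X + η)ᵀ * X := by
        rw [h1, Matrix.transpose_nonsing_inv, hsymm, h2]; simp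
    _ = (2 : ℝ) • (1 : Matrix (Fin p) (Fin p) ℝ) := by
        simp only [Matrix.mul_add, Matrix.add_mul, Matrix.transpose_add, hX, Matrix.transpose_transpose]
        have : Xᵀ * η + ηᵀ * X = 0 := hη
        rw [show (1 : Matrix (Fin p) (Fin p) ℝ) + Xᵀ * η + (1 + ηᵀ * X) = (Xᵀ * η + ηᵀ * X) + (2:ℝ) • 1 by rw [two_smul]; abel, this, zero_add]
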